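/- Let Q be a prime power, n > 0 and k ≥ 0 integers, β, γ ∈ F_{Q^2} with β^{Q+1} = 1 and γ^{Q+1} ≠ 1. Then f(x) := x^{n+k(Q+1)} · ((γx^{Q-1} - β)^n - γ(x^{Q-1} - γ^Q β)^n) permutes F_{Q^2} if and only if gcd(n + 2k, Q - 1) = 1 and gcd(n, Q + 1) = 1. -/

import Mathlib

section Aux
variable {F : Type*} [Field F]

lemma auxPowCancel {a b : F} (hb : b ≠ 0) {r s : ℕ} (h1 : a ^ r = b ^ r)
    (h2 : a ^ s = b ^ s) (hg : Nat.gcd r s = 1) : a = b := by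
  have hr : (a / b) ^ r = 1 := by rw [div_pow, h1, div_self (pow_ne_zero _ hb)]
  have hs : (a / b) ^ s = 1 := by rw [div_pow, h2, div_self (pow_ne_zero _ hb)]
  have hd : orderOf (a / b) ∣ 1 := by
    rw [← hg]
    exact Nat.dvd_gcd (orderOf_dvd_of_pow_eq_one hr) (orderOf_dvd_of_pow_eq_one hs)
  have h1' : a / b = 1 := orderOf_eq_one_iff.mp (Nat.dvd_one.mp hd)
  exact (div_eq_one_iff_eq hb).mp h1'

lemma aux1 (Q : ℕ) {β γ y : F} (hfr : ∀ a b : F, (a - b) ^ Q = a ^ Q - b ^ Q)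
    (hb : β ^ (Q + 1) = 1) (hy : y ^ (Q + 1) = 1) :
    (γ * y - β) ^ Q * (β * y) = -(y - γ ^ Q * β) := by
  have h1 : y ^ Q * y = 1 := by rw [← pow_succ]; exact hy
  have h2 : β ^ Q * β = 1 := by rw [← pow_succ]; exact hb
  rw [hfr, mul_pow]
  linear_combination (γ ^ Q * β) * h1 - y * h2

lemma aux2 (Q : ℕ) {β γ y : F} (hfr : ∀ a b : F, (a - b) ^ Q = a ^ Q - b ^ Q)
    (hg2 : (γ ^ Q) ^ Q = γ)
    (hb : β ^ (Q + 1) = 1) (hy : y ^ (Q + 1) = 1) :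
    (y - γ ^ Q * β) ^ Q * (β * y) = -(γ * y - β) := by
  have h1 : y ^ Q * y = 1 := by rw [← pow_succ]; exact hy
  have h2 : β ^ Q * β = 1 := by rw [← pow_succ]; exact hb
  rw [hfr, mul_pow, hg2]
  linear_combination β * h1 - γ * y * h2

lemma aux3 (Q : ℕ) {β γ y : F} (hfr : ∀ a b : F, (a - b) ^ Q = a ^ Q - b ^ Q)
    (hg2 : (γ ^ Q) ^ Q = γ)
    (hb : β ^ (Q + 1) = 1) (hy : y ^ (Q + 1) = 1) (hb0 : β ≠ 0) (hy0 : y ≠ 0) :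
    (γ * y - β) ^ (Q + 1) = (y - γ ^ Q * β) ^ (Q + 1) := by
  have e1 := aux1 Q (γ := γ) hfr hb hy
  have e2 := aux2 Q hfr hg2 hb hy
  have hby : β * y ≠ 0 := mul_ne_zero hb0 hy0
  apply mul_right_cancel₀ hby
  rw [pow_succ, pow_succ]
  linear_combination (γ * y - β) * e1 - (y - γ ^ Q * β) * e2

lemma aux5 (Q n : ℕ) {β γ y : F} (hfr : ∀ a b : F, (a - b) ^ Q = a ^ Q - b ^ Q)
    (hg2 : (γ ^ Q) ^ Q = γ)
    (hb : β ^ (Q + 1) = 1) (hy : y ^ (Q + 1) = 1) :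
    ((γ * y - β) ^ n - γ * (y - γ ^ Q * β) ^ n) ^ Q * (β * y) ^ n
      = (-1) ^ n * ((y - γ ^ Q * β) ^ n - γ ^ Q * (γ * y - β) ^ n) := by
  have e1 : ((γ * y - β) ^ Q * (β * y)) ^ n = (-1) ^ n * (y - γ ^ Q * β) ^ n := by
    rw [aux1 Q hfr hb hy, neg_pow]
  have e2 : ((y - γ ^ Q * β) ^ Q * (β * y)) ^ n = (-1) ^ n * (γ * y - β) ^ n := by
    rw [aux2 Q hfr hg2 hb hy, neg_pow]
  rw [mul_pow] at e1 e2
  rw [hfr, mul_pow, pow_right_comm (γ * y - β) n Q, pow_right_comm (y - γ ^ Q * β) n Q]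
  linear_combination e1 - γ ^ Q * e2

end Aux

set_option maxHeartbeats 1000000 in
theorem stmt_5 (p e Q : ℕ) (hp : p.Prime) (he : 0 < e) (hQ : Q = p ^ e)
    (F : Type*) [Field F] [Fintype F] (hF : Fintype.card F = Q ^ 2)
    (n k : ℕ) (hn : 0 < n)
    (β γ : F) (hβ : β ^ (Q + 1) = 1) (hγ : γ ^ (Q + 1) ≠ 1) :
    Function.Bijective (fun x : F => x ^ (n + k * (Q + 1)) *
        ((γ * x ^ (Q - 1) - β) ^ n - γ * (x ^ (Q - 1) - γ ^ Q * β) ^ n)) ↔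
      (Nat.gcd (n + 2 * k) (Q - 1) = 1 ∧ Nat.gcd n (Q + 1) = 1) := by
  classical
  have hQ2 : 2 ≤ Q := by
    rw [hQ]
    calc 2 ≤ p := hp.two_le
      _ ≤ p ^ e := Nat.le_self_pow he.ne' p
  have hQQ : (Q - 1) * (Q + 1) = Q ^ 2 - 1 := by
    obtain ⟨t, rfl⟩ : ∃ t, Q = t + 2 := ⟨Q - 2, by omega⟩
    have h1 : (t + 2) ^ 2 = t * t + 4 * t + 4 := by ring
    have h2 : (t + 2 - 1) * (t + 2 + 1) = t * t + 4 * t + 3 := by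
      have h : t + 2 - 1 = t + 1 := by omega
      rw [h]; ring
    omega
  have hcharF : CharP F p := by
    haveI hr : CharP F (ringChar F) := ringChar.charP F
    obtain ⟨m, hprime, hcard⟩ := FiniteField.card F (ringChar F)
    have hdvd : ringChar F ∣ p ^ (2 * e) := by
      have h : Fintype.card F = p ^ (2 * e) := by rw [hF, hQ, ← pow_mul, mul_comm]
      rw [h] at hcard
      exact hcard ▸ dvd_pow_self (ringChar F) m.pos.ne'
    have h : ringChar F = p :=
      (Nat.prime_dvd_prime_iff_eq hprime hp).mp (hprime.dvd_of_dvd_pow hdvd)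
    exact h ▸ hr
  haveI := hcharF
  haveI : Fact p.Prime := ⟨hp⟩
  have hfr : ∀ a b : F, (a - b) ^ Q = a ^ Q - b ^ Q := by
    intro a b; rw [hQ]; exact sub_pow_char_pow a b e
  have hpowcard : ∀ x : F, x ^ Q ^ 2 = x := fun x => by
    rw [← hF]; exact FiniteField.pow_card x
  have hg2 : ∀ x : F, (x ^ Q) ^ Q = x := fun x => by
    rw [← pow_mul, show Q * Q = Q ^ 2 from (sq Q).symm]; exact hpowcard x
  have hcardu : Fintype.card Fˣ = Q ^ 2 - 1 := by rw [Fintype.card_units, hF]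
  obtain ⟨ξ, hξ⟩ := IsCyclic.exists_generator (α := Fˣ)
  have hordξ : orderOf ξ = Q ^ 2 - 1 := by
    rw [orderOf_eq_card_of_forall_mem_zpowers hξ, Nat.card_eq_fintype_card, hcardu]
  have hsurj : ∀ c : F, c ^ (Q + 1) = 1 → ∃ v : F, v ^ (Q - 1) = c := by
    intro c hc
    have hc0 : c ≠ 0 := by
      rintro rfl; rw [zero_pow (by omega : Q + 1 ≠ 0)] at hc; exact zero_ne_one hc
    obtain ⟨t, ht⟩ : ∃ t : ℕ, ξ ^ t = Units.mk0 c hc0 := by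
      have h := hξ (Units.mk0 c hc0)
      rwa [← mem_powers_iff_mem_zpowers, Submonoid.mem_powers_iff] at h
    have hu : ξ ^ (t * (Q + 1)) = 1 := by
      rw [pow_mul, ht]
      apply Units.ext
      rw [Units.val_pow_eq_pow_val]
      simpa using hc
    have hdvd : (Q - 1) * (Q + 1) ∣ t * (Q + 1) := by
      rw [hQQ, ← hordξ]; exact orderOf_dvd_of_pow_eq_one hu
    have hd2 : (Q - 1) ∣ t := (Nat.mul_dvd_mul_iff_right (by omega : 0 < Q + 1)).mp hdvd
    obtain ⟨u, hu'⟩ := hd2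
    refine ⟨((ξ ^ u : Fˣ) : F), ?_⟩
    rw [← Units.val_pow_eq_pow_val, ← pow_mul, show u * (Q - 1) = t from by rw [hu', mul_comm], ht]
    rfl
  -- basic nonvanishing and identities
  have hb0 : β ≠ 0 := by
    rintro rfl; rw [zero_pow (by omega : Q + 1 ≠ 0)] at hβ; exact zero_ne_one hβ
  have hm1 : ((-1 : F) ^ n) ≠ 0 := pow_ne_zero _ (neg_ne_zero.mpr one_ne_zero)
  have hm0 : n + k * (Q + 1) ≠ 0 := fun h => hn.ne' (Nat.eq_zero_of_add_eq_zero_right h)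
  have hγfix : (γ ^ (Q + 1)) ^ Q = γ ^ (Q + 1) := by
    calc (γ ^ (Q + 1)) ^ Q = (γ ^ Q) ^ (Q + 1) := pow_right_comm γ _ _
      _ = (γ ^ Q) ^ Q * γ ^ Q := pow_succ _ _
      _ = γ * γ ^ Q := by rw [hg2 γ]
      _ = γ ^ (Q + 1) := by rw [pow_succ]; ring
  have hA0 : ∀ y : F, y ^ (Q + 1) = 1 → γ * y - β ≠ 0 := by
    intro y hy h
    have h' : γ * y = β := by linear_combination h
    apply hγ
    have h2 := congrArg (· ^ (Q + 1)) h'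
    simp only [mul_pow] at h2
    rw [hy, mul_one, hβ] at h2
    exact h2
  have hB0 : ∀ y : F, y ^ (Q + 1) = 1 → y - γ ^ Q * β ≠ 0 := by
    intro y hy h
    have h' : y = γ ^ Q * β := by linear_combination h
    apply hγ
    calc γ ^ (Q + 1) = (γ ^ (Q + 1)) ^ Q := hγfix.symm
      _ = (γ ^ Q) ^ (Q + 1) := pow_right_comm γ _ _
      _ = (γ ^ Q) ^ (Q + 1) * β ^ (Q + 1) := by rw [hβ, mul_one]
      _ = (γ ^ Q * β) ^ (Q + 1) := (mul_pow _ _ _).symm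
      _ = y ^ (Q + 1) := by rw [← h']
      _ = 1 := hy
  have hμ0 : ∀ y : F, y ^ (Q + 1) = 1 → y ≠ 0 := by
    intro y hy h
    rw [h, zero_pow (by omega : Q + 1 ≠ 0)] at hy
    exact zero_ne_one hy
  have hgnz : ∀ y : F, y ^ (Q + 1) = 1 →
      (γ * y - β) ^ n - γ * (y - γ ^ Q * β) ^ n ≠ 0 := by
    intro y hy h
    have hy0 := hμ0 y hy
    have hB := hB0 y hy
    have he' : (γ * y - β) ^ n = γ * (y - γ ^ Q * β) ^ n := by linear_combination h
    have hX : ((y - γ ^ Q * β) ^ n) ^ (Q + 1) ≠ 0 := pow_ne_zero _ (pow_ne_zero _ hB)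
    have h3 : ((y - γ ^ Q * β) ^ n) ^ (Q + 1) = γ ^ (Q + 1) * ((y - γ ^ Q * β) ^ n) ^ (Q + 1) := by
      calc ((y - γ ^ Q * β) ^ n) ^ (Q + 1) = ((y - γ ^ Q * β) ^ (Q + 1)) ^ n :=
            pow_right_comm _ _ _
        _ = ((γ * y - β) ^ (Q + 1)) ^ n := by rw [aux3 Q hfr (hg2 γ) hβ hy hb0 hy0]
        _ = ((γ * y - β) ^ n) ^ (Q + 1) := pow_right_comm _ _ _
        _ = (γ * (y - γ ^ Q * β) ^ n) ^ (Q + 1) := by rw [he']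
        _ = γ ^ (Q + 1) * ((y - γ ^ Q * β) ^ n) ^ (Q + 1) := mul_pow _ _ _
    have h4 : γ ^ (Q + 1) * ((y - γ ^ Q * β) ^ n) ^ (Q + 1)
        = 1 * ((y - γ ^ Q * β) ^ n) ^ (Q + 1) := by rw [one_mul, ← h3]
    exact hγ (mul_right_cancel₀ hX h4)
  have hμx : ∀ x : F, x ≠ 0 → (x ^ (Q - 1)) ^ (Q + 1) = 1 := by
    intro x hx0
    rw [← pow_mul, hQQ]
    have h := FiniteField.pow_card_sub_one_eq_one x hx0
    rwa [hF] at h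
  have hfval : ∀ x : F, x ≠ 0 →
      (x ^ (n + k * (Q + 1)) * ((γ * x ^ (Q - 1) - β) ^ n - γ * (x ^ (Q - 1) - γ ^ Q * β) ^ n)) ^ (Q - 1)
        = (x ^ (Q - 1)) ^ n * ((γ * x ^ (Q - 1) - β) ^ n - γ * (x ^ (Q - 1) - γ ^ Q * β) ^ n) ^ (Q - 1) := by
    intro x hx0
    rw [mul_pow]
    congr 1
    calc (x ^ (n + k * (Q + 1))) ^ (Q - 1) = (x ^ (Q - 1)) ^ (n + k * (Q + 1)) :=
          pow_right_comm x _ _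
      _ = (x ^ (Q - 1)) ^ n * ((x ^ (Q - 1)) ^ (Q + 1)) ^ k := by rw [pow_add, mul_comm k (Q + 1), pow_mul]
      _ = (x ^ (Q - 1)) ^ n := by rw [hμx x hx0, one_pow, mul_one]
  have hI : ∀ y : F, y ^ (Q + 1) = 1 →
      y ^ n * ((γ * y - β) ^ n - γ * (y - γ ^ Q * β) ^ n) ^ Q * β ^ n
        = (-1 : F) ^ n * ((y - γ ^ Q * β) ^ n - γ ^ Q * (γ * y - β) ^ n) := by
    intro y hy
    have h5 := aux5 Q n hfr (hg2 γ) hβ hy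
    calc y ^ n * ((γ * y - β) ^ n - γ * (y - γ ^ Q * β) ^ n) ^ Q * β ^ n
        = ((γ * y - β) ^ n - γ * (y - γ ^ Q * β) ^ n) ^ Q * (β * y) ^ n := by
          rw [mul_pow]; ring
      _ = (-1 : F) ^ n * ((y - γ ^ Q * β) ^ n - γ ^ Q * (γ * y - β) ^ n) := h5
  have hneg1 : (-1 : F) ^ (Q + 1) = 1 := by
    by_cases hp2 : p = 2
    · haveI : CharP F 2 := by rw [← hp2]; exact hcharF
      have h2 : (-1 : F) = 1 := by
        have hh := CharP.cast_eq_zero F 2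
        push_cast at hh
        linear_combination -hh
      rw [h2, one_pow]
    · have hodd : Odd Q := by
        rw [hQ]; exact (hp.odd_of_ne_two hp2).pow
      exact (Odd.add_one hodd).neg_one_pow
  have hγm1 : 1 - γ ^ (Q + 1) ≠ 0 := by
    intro h; exact hγ (by linear_combination -h)
  constructor
  · intro hbij
    have hinj := hbij.injective
    constructor
    · -- gcd (n+2k) (Q-1) = 1
      by_contra hne
      have hdl : Nat.gcd (n + 2 * k) (Q - 1) ∣ (n + 2 * k) := Nat.gcd_dvd_left _ _
      have hdr : Nat.gcd (n + 2 * k) (Q - 1) ∣ (Q - 1) := Nat.gcd_dvd_right _ _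
      set d := Nat.gcd (n + 2 * k) (Q - 1) with hd
      have hdpos : 0 < d := Nat.gcd_pos_of_pos_right _ (by omega)
      have hd2 : 2 ≤ d := by omega
      obtain ⟨w, hw⟩ := hdr
      obtain ⟨v, hv⟩ := hdl
      have hw0 : 0 < w := by
        rcases Nat.eq_zero_or_pos w with h | h
        · rw [h, mul_zero] at hw; omega
        · exact h
      have hexp : w * (Q + 1) * d = Q ^ 2 - 1 := by rw [← hQQ, hw]; ring
      have hζd : (ξ ^ (w * (Q + 1))) ^ d = 1 := by
        rw [← pow_mul, hexp, ← hordξ, pow_orderOf_eq_one]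
      have hζ1 : ξ ^ (w * (Q + 1)) ≠ 1 := by
        apply pow_ne_one_of_lt_orderOf
        · exact Nat.mul_ne_zero hw0.ne' (by omega)
        · rw [hordξ, ← hexp]
          exact lt_mul_of_one_lt_right (Nat.mul_pos hw0 (by omega)) hd2
      have hζs : ((ξ ^ (w * (Q + 1)) : Fˣ) : F) ^ (Q - 1) = 1 := by
        have h1 : (ξ ^ (w * (Q + 1))) ^ (Q - 1) = 1 := by
          rw [hw, pow_mul, hζd, one_pow]
        calc ((ξ ^ (w * (Q + 1)) : Fˣ) : F) ^ (Q - 1)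
            = (((ξ ^ (w * (Q + 1))) ^ (Q - 1) : Fˣ) : F) := (Units.val_pow_eq_pow_val _ _).symm
          _ = 1 := by rw [h1]; rfl
      have hζm : ((ξ ^ (w * (Q + 1)) : Fˣ) : F) ^ (n + k * (Q + 1)) = 1 := by
        have hexp2 : n + k * (Q + 1) = d * (v + k * w) := by
          rw [show Q + 1 = (Q - 1) + 2 from by omega, hw]
          calc n + k * (d * w + 2) = (n + 2 * k) + d * (k * w) := by ring
            _ = d * v + d * (k * w) := by rw [hv]
            _ = d * (v + k * w) := by ring
        have h1 : (ξ ^ (w * (Q + 1))) ^ (n + k * (Q + 1)) = 1 := by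
          rw [hexp2, pow_mul, hζd, one_pow]
        calc ((ξ ^ (w * (Q + 1)) : Fˣ) : F) ^ (n + k * (Q + 1))
            = (((ξ ^ (w * (Q + 1))) ^ (n + k * (Q + 1)) : Fˣ) : F) :=
              (Units.val_pow_eq_pow_val _ _).symm
          _ = 1 := by rw [h1]; rfl
      have heq : (fun x : F => x ^ (n + k * (Q + 1)) *
          ((γ * x ^ (Q - 1) - β) ^ n - γ * (x ^ (Q - 1) - γ ^ Q * β) ^ n))
            ((ξ ^ (w * (Q + 1)) : Fˣ) : F)
          = (fun x : F => x ^ (n + k * (Q + 1)) *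
          ((γ * x ^ (Q - 1) - β) ^ n - γ * (x ^ (Q - 1) - γ ^ Q * β) ^ n)) (1 : F) := by
        simp only [hζs, hζm, one_pow, one_mul]
      have hζval := hinj heq
      exact hζ1 (Units.val_eq_one.mp hζval)
    · -- gcd n (Q+1) = 1
      by_contra hne
      have hdn : Nat.gcd n (Q + 1) ∣ n := Nat.gcd_dvd_left _ _
      have hdq : Nat.gcd n (Q + 1) ∣ (Q + 1) := Nat.gcd_dvd_right _ _
      set d := Nat.gcd n (Q + 1) with hd
      have hdpos : 0 < d := Nat.gcd_pos_of_pos_right _ (by omega)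
      have hd2 : 2 ≤ d := by omega
      obtain ⟨t, ht⟩ := hdq
      obtain ⟨n', hn'⟩ := hdn
      have ht0 : 0 < t := by
        rcases Nat.eq_zero_or_pos t with h | h
        · rw [h, mul_zero] at ht; omega
        · exact h
      have hty : t < Q + 1 := by
        have h2 : t * 2 ≤ t * d := Nat.mul_le_mul_left t hd2
        rw [mul_comm t d, ← ht] at h2
        omega
      have hy0qu : (ξ ^ (Q - 1)) ^ (Q + 1) = 1 := by
        rw [← pow_mul, hQQ, ← hordξ, pow_orderOf_eq_one]
      have hy0tu : (ξ ^ (Q - 1)) ^ t ≠ 1 := by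
        rw [← pow_mul]
        apply pow_ne_one_of_lt_orderOf
        · exact Nat.mul_ne_zero (by omega) (by omega)
        · rw [hordξ, ← hQQ]
          exact mul_lt_mul_of_pos_left hty (by omega : 0 < Q - 1)
      set y₀ : F := ((ξ ^ (Q - 1) : Fˣ) : F) with hy₀def
      have hy₀μ : y₀ ^ (Q + 1) = 1 := by
        rw [hy₀def, ← Units.val_pow_eq_pow_val, hy0qu]; rfl
      have hy₀t : y₀ ^ t ≠ 1 := by
        intro h
        apply hy0tu
        apply Units.val_eq_one.mp
        rw [Units.val_pow_eq_pow_val]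
        exact h
      have hy₀0 : y₀ ≠ 0 := hμ0 y₀ hy₀μ
      have hN0 : y₀ - γ ^ Q ≠ 0 := by
        intro h
        have h' : y₀ = γ ^ Q := by linear_combination h
        apply hγ
        calc γ ^ (Q + 1) = (γ ^ (Q + 1)) ^ Q := hγfix.symm
          _ = (γ ^ Q) ^ (Q + 1) := pow_right_comm γ _ _
          _ = y₀ ^ (Q + 1) := by rw [h']
          _ = 1 := hy₀μ
      have hD0 : 1 - γ * y₀ ≠ 0 := by
        intro h
        have h' : γ * y₀ = 1 := by linear_combination -h
        apply hγ
        have h2 := congrArg (· ^ (Q + 1)) h'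
        simp only [mul_pow, one_pow] at h2
        rw [hy₀μ, mul_one] at h2
        exact h2
      have hND : (y₀ - γ ^ Q) ^ (Q + 1) = (1 - γ * y₀) ^ (Q + 1) := by
        have h1 := aux3 Q (β := (1 : F)) (γ := γ) (y := y₀) hfr (hg2 γ) (one_pow _) hy₀μ
          one_ne_zero hy₀0
        have h2 : (1 - γ * y₀) ^ (Q + 1) = (-1 : F) ^ (Q + 1) * (γ * y₀ - 1) ^ (Q + 1) := by
          rw [← mul_pow]
          congr 1
          ring
        rw [mul_one] at h1
        rw [h2, hneg1, one_mul]
        exact h1.symm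
      have hc₀0 : ((-1 : F) ^ n * (y₀ - γ ^ Q)) / (β ^ n * (1 - γ * y₀)) ≠ 0 :=
        div_ne_zero (mul_ne_zero hm1 hN0) (mul_ne_zero (pow_ne_zero _ hb0) hD0)
      have hc₀μ : (((-1 : F) ^ n * (y₀ - γ ^ Q)) / (β ^ n * (1 - γ * y₀))) ^ (Q + 1) = 1 := by
        rw [div_pow, mul_pow, mul_pow, hND, pow_right_comm (-1 : F) n (Q + 1), hneg1,
          one_pow, one_mul, pow_right_comm β n (Q + 1), hβ, one_pow, one_mul]
        exact div_self (pow_ne_zero _ hD0)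
      obtain ⟨v, hv'⟩ := hsurj _ hc₀μ
      have hv0 : v ≠ 0 := by
        rintro rfl
        rw [zero_pow (by omega : Q - 1 ≠ 0)] at hv'
        exact hc₀0 hv'.symm
      obtain ⟨x, hx⟩ := hbij.surjective v
      simp only at hx
      have hx0 : x ≠ 0 := by
        rintro rfl
        rw [zero_pow hm0, zero_mul] at hx
        exact hv0 hx.symm
      have hyμ : (x ^ (Q - 1)) ^ (Q + 1) = 1 := hμx x hx0
      have hy0 : x ^ (Q - 1) ≠ 0 := pow_ne_zero _ hx0
      have hgy := hgnz (x ^ (Q - 1)) hyμ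
      -- key equation : M(y) = c₀
      have h1 : (x ^ (Q - 1)) ^ n *
          ((γ * x ^ (Q - 1) - β) ^ n - γ * (x ^ (Q - 1) - γ ^ Q * β) ^ n) ^ (Q - 1)
          = ((-1 : F) ^ n * (y₀ - γ ^ Q)) / (β ^ n * (1 - γ * y₀)) := by
        rw [← hfval x hx0, hx, hv']
      have h2 : (x ^ (Q - 1)) ^ n *
          ((γ * x ^ (Q - 1) - β) ^ n - γ * (x ^ (Q - 1) - γ ^ Q * β) ^ n) ^ Q
          = (((-1 : F) ^ n * (y₀ - γ ^ Q)) / (β ^ n * (1 - γ * y₀))) *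
            ((γ * x ^ (Q - 1) - β) ^ n - γ * (x ^ (Q - 1) - γ ^ Q * β) ^ n) := by
        rw [← h1, mul_assoc, ← pow_succ, show Q - 1 + 1 = Q from by omega]
      have h3 : (-1 : F) ^ n * ((x ^ (Q - 1) - γ ^ Q * β) ^ n
            - γ ^ Q * (γ * x ^ (Q - 1) - β) ^ n) * (1 - γ * y₀)
          = (-1 : F) ^ n * ((y₀ - γ ^ Q) *
            ((γ * x ^ (Q - 1) - β) ^ n - γ * (x ^ (Q - 1) - γ ^ Q * β) ^ n)) := by
        rw [← hI (x ^ (Q - 1)) hyμ]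
        have h4 := congrArg (fun z => z * β ^ n * (1 - γ * y₀)) h2
        calc (x ^ (Q - 1)) ^ n *
              ((γ * x ^ (Q - 1) - β) ^ n - γ * (x ^ (Q - 1) - γ ^ Q * β) ^ n) ^ Q * β ^ n *
              (1 - γ * y₀)
            = (((-1 : F) ^ n * (y₀ - γ ^ Q)) / (β ^ n * (1 - γ * y₀))) *
              ((γ * x ^ (Q - 1) - β) ^ n - γ * (x ^ (Q - 1) - γ ^ Q * β) ^ n) * β ^ n *
              (1 - γ * y₀) := h4
          _ = (-1 : F) ^ n * ((y₀ - γ ^ Q) *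
              ((γ * x ^ (Q - 1) - β) ^ n - γ * (x ^ (Q - 1) - γ ^ Q * β) ^ n)) := by
              rw [div_mul_eq_mul_div, div_mul_eq_mul_div, div_mul_eq_mul_div,
                div_eq_iff (mul_ne_zero (pow_ne_zero _ hb0) hD0)]
              ring
      have h5 := mul_left_cancel₀ hm1 (by linear_combination h3 :
        (-1 : F) ^ n * (((x ^ (Q - 1) - γ ^ Q * β) ^ n
            - γ ^ Q * (γ * x ^ (Q - 1) - β) ^ n) * (1 - γ * y₀))
          = (-1 : F) ^ n * ((y₀ - γ ^ Q) *
            ((γ * x ^ (Q - 1) - β) ^ n - γ * (x ^ (Q - 1) - γ ^ Q * β) ^ n)))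
      -- h5 : (B - γ^Q A)(1 - γ y₀) = (y₀ - γ^Q)(A - γ B)
      have h6 : (1 - γ ^ (Q + 1)) * ((x ^ (Q - 1) - γ ^ Q * β) ^ n
          - y₀ * (γ * x ^ (Q - 1) - β) ^ n) = 0 := by
        linear_combination h5
      have h7 : (x ^ (Q - 1) - γ ^ Q * β) ^ n = y₀ * (γ * x ^ (Q - 1) - β) ^ n := by
        rcases mul_eq_zero.mp h6 with h | h
        · exact absurd h hγm1
        · linear_combination h
      have hAt : ((γ * x ^ (Q - 1) - β) ^ n) ^ t ≠ 0 :=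
        pow_ne_zero _ (pow_ne_zero _ (hA0 _ hyμ))
      have hBt : ((x ^ (Q - 1) - γ ^ Q * β) ^ n) ^ t = ((γ * x ^ (Q - 1) - β) ^ n) ^ t := by
        rw [← pow_mul, ← pow_mul, show n * t = (Q + 1) * n' from by rw [hn', ht]; ring,
          pow_mul, pow_mul, aux3 Q hfr (hg2 γ) hβ hyμ hb0 hy0]
      have h8 : ((γ * x ^ (Q - 1) - β) ^ n) ^ t
          = y₀ ^ t * ((γ * x ^ (Q - 1) - β) ^ n) ^ t := by
        calc ((γ * x ^ (Q - 1) - β) ^ n) ^ t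
            = ((x ^ (Q - 1) - γ ^ Q * β) ^ n) ^ t := hBt.symm
          _ = (y₀ * (γ * x ^ (Q - 1) - β) ^ n) ^ t := by rw [h7]
          _ = y₀ ^ t * ((γ * x ^ (Q - 1) - β) ^ n) ^ t := mul_pow _ _ _
      apply hy₀t
      have h9 : y₀ ^ t * ((γ * x ^ (Q - 1) - β) ^ n) ^ t
          = 1 * ((γ * x ^ (Q - 1) - β) ^ n) ^ t := by rw [one_mul, ← h8]
      exact mul_right_cancel₀ hAt h9
  · rintro ⟨hgc1, hgc2⟩
    apply Finite.injective_iff_bijective.mp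
    intro x₁ x₂ hfe
    simp only at hfe
    by_cases h1 : x₁ = 0
    · subst h1
      rw [zero_pow hm0, zero_mul] at hfe
      by_contra h2
      have h2' : x₂ ≠ 0 := fun h => h2 h.symm
      exact (mul_ne_zero (pow_ne_zero _ h2') (hgnz _ (hμx x₂ h2'))) hfe.symm
    by_cases h2 : x₂ = 0
    · subst h2
      rw [zero_pow hm0, zero_mul] at hfe
      exact absurd hfe (mul_ne_zero (pow_ne_zero _ h1) (hgnz _ (hμx x₁ h1)))
    have hy₁μ := hμx x₁ h1
    have hy₂μ := hμx x₂ h2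
    have hgy₁ := hgnz _ hy₁μ
    have hgy₂ := hgnz _ hy₂μ
    have hpowQ : ∀ z : F, z ^ (Q - 1) * z = z ^ Q := fun z => by
      rw [← pow_succ, show Q - 1 + 1 = Q from by omega]
    have hM : (x₁ ^ (Q - 1)) ^ n *
        ((γ * x₁ ^ (Q - 1) - β) ^ n - γ * (x₁ ^ (Q - 1) - γ ^ Q * β) ^ n) ^ (Q - 1)
        = (x₂ ^ (Q - 1)) ^ n *
        ((γ * x₂ ^ (Q - 1) - β) ^ n - γ * (x₂ ^ (Q - 1) - γ ^ Q * β) ^ n) ^ (Q - 1) := by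
      rw [← hfval x₁ h1, ← hfval x₂ h2, hfe]
    have e1 : (x₁ ^ (Q - 1)) ^ n *
        ((γ * x₁ ^ (Q - 1) - β) ^ n - γ * (x₁ ^ (Q - 1) - γ ^ Q * β) ^ n) ^ Q * β ^ n *
        ((γ * x₂ ^ (Q - 1) - β) ^ n - γ * (x₂ ^ (Q - 1) - γ ^ Q * β) ^ n)
        = (x₂ ^ (Q - 1)) ^ n *
        ((γ * x₂ ^ (Q - 1) - β) ^ n - γ * (x₂ ^ (Q - 1) - γ ^ Q * β) ^ n) ^ Q * β ^ n *
        ((γ * x₁ ^ (Q - 1) - β) ^ n - γ * (x₁ ^ (Q - 1) - γ ^ Q * β) ^ n) := by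
      rw [← hpowQ ((γ * x₁ ^ (Q - 1) - β) ^ n - γ * (x₁ ^ (Q - 1) - γ ^ Q * β) ^ n),
        ← hpowQ ((γ * x₂ ^ (Q - 1) - β) ^ n - γ * (x₂ ^ (Q - 1) - γ ^ Q * β) ^ n)]
      linear_combination (((γ * x₁ ^ (Q - 1) - β) ^ n - γ * (x₁ ^ (Q - 1) - γ ^ Q * β) ^ n) *
        ((γ * x₂ ^ (Q - 1) - β) ^ n - γ * (x₂ ^ (Q - 1) - γ ^ Q * β) ^ n) * β ^ n) * hM
    rw [hI _ hy₁μ, hI _ hy₂μ] at e1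
    have hcross := mul_left_cancel₀ hm1 (show
        (-1 : F) ^ n * (((x₁ ^ (Q - 1) - γ ^ Q * β) ^ n - γ ^ Q * (γ * x₁ ^ (Q - 1) - β) ^ n) *
          ((γ * x₂ ^ (Q - 1) - β) ^ n - γ * (x₂ ^ (Q - 1) - γ ^ Q * β) ^ n))
        = (-1 : F) ^ n * (((x₂ ^ (Q - 1) - γ ^ Q * β) ^ n - γ ^ Q * (γ * x₂ ^ (Q - 1) - β) ^ n) *
          ((γ * x₁ ^ (Q - 1) - β) ^ n - γ * (x₁ ^ (Q - 1) - γ ^ Q * β) ^ n))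
        from by linear_combination e1)
    have h6 : (1 - γ ^ (Q + 1)) *
        (((x₁ ^ (Q - 1) - γ ^ Q * β) * (γ * x₂ ^ (Q - 1) - β)) ^ n
          - ((x₂ ^ (Q - 1) - γ ^ Q * β) * (γ * x₁ ^ (Q - 1) - β)) ^ n) = 0 := by
      rw [mul_pow, mul_pow]
      linear_combination hcross
    have hPn : ((x₁ ^ (Q - 1) - γ ^ Q * β) * (γ * x₂ ^ (Q - 1) - β)) ^ n
        = ((x₂ ^ (Q - 1) - γ ^ Q * β) * (γ * x₁ ^ (Q - 1) - β)) ^ n := by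
      rcases mul_eq_zero.mp h6 with h | h
      · exact absurd h hγm1
      · linear_combination h
    have hPQ : ((x₁ ^ (Q - 1) - γ ^ Q * β) * (γ * x₂ ^ (Q - 1) - β)) ^ (Q + 1)
        = ((x₂ ^ (Q - 1) - γ ^ Q * β) * (γ * x₁ ^ (Q - 1) - β)) ^ (Q + 1) := by
      rw [mul_pow, mul_pow,
        ← aux3 Q hfr (hg2 γ) hβ hy₁μ hb0 (pow_ne_zero _ h1),
        ← aux3 Q hfr (hg2 γ) hβ hy₂μ hb0 (pow_ne_zero _ h2)]
      ring
    have hR0 : (x₂ ^ (Q - 1) - γ ^ Q * β) * (γ * x₁ ^ (Q - 1) - β) ≠ 0 :=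
      mul_ne_zero (hB0 _ hy₂μ) (hA0 _ hy₁μ)
    have hPR := auxPowCancel hR0 hPn hPQ hgc2
    have hyy : x₁ ^ (Q - 1) = x₂ ^ (Q - 1) := by
      have h0 : β * (1 - γ ^ (Q + 1)) * (x₂ ^ (Q - 1) - x₁ ^ (Q - 1)) = 0 := by
        linear_combination hPR
      rcases mul_eq_zero.mp h0 with h | h
      · rcases mul_eq_zero.mp h with h' | h'
        · exact absurd h' hb0
        · exact absurd h' hγm1
      · linear_combination -h
    have hxm : x₁ ^ (n + k * (Q + 1)) = x₂ ^ (n + k * (Q + 1)) := by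
      apply mul_right_cancel₀ hgy₂
      rw [hyy] at hfe
      exact hfe
    have hgcdm : Nat.gcd (n + k * (Q + 1)) (Q - 1) = 1 := by
      rw [show n + k * (Q + 1) = (n + 2 * k) + k * (Q - 1) from by
        rw [show Q + 1 = (Q - 1) + 2 from by omega]; ring, Nat.gcd_add_mul_right_left]
      exact hgc1
    exact auxPowCancel h2 hxm hyy hgcdm
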